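/- Let X be a finite-dimensional real inner product space, F: X → X a linear isomorphism such that there exists λ > 0 with ⟨z, Fz⟩ ≥ λ‖z‖² for all z, and let A: X ⇉ X be monotone with F-resolvent T_A = (A+F)^{-1}F single-valued on C. Then T_A is Lipschitz continuous on C with constant ‖F‖/λ: ‖T_A x − T_A y‖ ≤ (‖F‖/λ)‖x − y‖ for all x,y ∈ C. -/

import Mathlib

open RealInnerProductSpace

/-- If `F` is a linear isomorphism of a finite-dimensional real inner product space with
`⟪z, F z⟫ ≥ λ‖z‖²` and `A` is monotone with single-valued `F`-resolvent `T_A` on `C`, then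
`T_A` is `‖F‖/λ`-Lipschitz on `C`. -/
theorem stmt_8 {X : Type*} [NormedAddCommGroup X] [InnerProductSpace ℝ X]
    [FiniteDimensional ℝ X]
    (F : X →L[ℝ] X) (hFbij : Function.Bijective F)
    (lam : ℝ) (hlam : 0 < lam) (hcoerc : ∀ z : X, lam * ‖z‖ ^ 2 ≤ ⟪z, F z⟫)
    (A : X → Set X)
    (hA : ∀ x y x' y', x' ∈ A x → y' ∈ A y → 0 ≤ ⟪x - y, x' - y'⟫)
    (C : Set X) (T : X → X)
    (hT : ∀ x ∈ C, F x - F (T x) ∈ A (T x)) :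
    ∀ x ∈ C, ∀ y ∈ C, ‖T x - T y‖ ≤ (‖F‖ / lam) * ‖x - y‖ := by
  intro x hx y hy
  set u := T x
  set v := T y
  have hmono := hA u v (F x - F u) (F y - F v) (hT x hx) (hT y hy)
  have key : lam * ‖u - v‖ ^ 2 ≤ ⟪u - v, F (x - y)⟫ := by
    calc lam * ‖u - v‖ ^ 2 ≤ ⟪u - v, F (u - v)⟫ := hcoerc _
      _ ≤ ⟪u - v, F (x - y)⟫ := by
          have : ⟪u - v, F (x - y)⟫ - ⟪u - v, F (u - v)⟫
              = ⟪u - v, (F x - F u) - (F y - F v)⟫ := by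
            rw [← inner_sub_right]
            congr 1
            simp [map_sub]
            abel
          linarith [this ▸ hmono]
  have h2 : ⟪u - v, F (x - y)⟫ ≤ ‖u - v‖ * (‖F‖ * ‖x - y‖) :=
    (real_inner_le_norm _ _).trans (by
      gcongr
      exact F.le_opNorm _)
  rcases eq_or_ne u v with h | h
  · simp [h]
    positivity
  · have hpos : 0 < ‖u - v‖ := by
      rw [norm_pos_iff]; exact sub_ne_zero.mpr h
    rw [div_mul_eq_mul_div, le_div_iff₀ hlam]
    have : lam * ‖u - v‖ ^ 2 ≤ ‖u - v‖ * (‖F‖ * ‖x - y‖) := key.trans h2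
    nlinarith
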